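/- arXiv:2506.10339 — 2 statements merged into one kernel-verified Lean document; each statement's English description precedes it below -/
import Mathlib

section
/- Let ε ∈ (0,1) with 1/ε an integer, and let I be any discrete inventory staggering instance. Then there exists an ordered partition (S_1, …, S_M, S_∞) of the item set [n] such that: (1) max_{i∈S_m} T_i ≤ (1/ε)^{1/ε}·min_{i∈S_m} T_i for every m ∈ [M]; (2) T_{i1} ≤ ε·T_{i2} for every i1 ∈ S_{m1} and i2 ∈ S_{m2} with 1 ≤ m1 < m2 ≤ M; and (3) Σ_{i ∈ S_∞} H_i ≤ ε·H_Σ. -/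
noncomputable def invLevel (T H : ℕ) (τ t : ℤ) : ℝ :=
  (H : ℝ) * (1 - (((t - τ) % (T : ℤ) : ℤ) : ℝ) / (T : ℝ))

noncomputable def totalInv {ι : Type*} [Fintype ι] (T H : ι → ℕ) (τ : ι → ℤ) (t : ℤ) : ℝ :=
  ∑ i, invLevel (T i) (H i) (τ i) t

def cycleLen {ι : Type*} [Fintype ι] (T : ι → ℕ) : ℕ := Finset.univ.lcm T

noncomputable def Imax {ι : Type*} [Fintype ι] (T H : ι → ℕ) (τ : ι → ℤ) : ℝ :=
  sSup (totalInv T H τ '' Set.Ico (0 : ℤ) (cycleLen T : ℤ))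

noncomputable def OPTdisc {ι : Type*} [Fintype ι] (T H : ι → ℕ) : ℝ :=
  sInf (Set.range (Imax T H))

/-- From `x / k = b` (with `0 < k`) we get the two linear bounds. -/
lemma div_eq_bounds {x k b : ℕ} (hk : 0 < k) (h : x / k = b) :
    b * k ≤ x ∧ x < b * k + k := by
  subst h
  refine ⟨Nat.div_mul_le_self x k, ?_⟩
  have h2 : x < (x / k + 1) * k := (Nat.div_lt_iff_lt_mul hk).mp (Nat.lt_succ_self _)
  rwa [add_mul, one_mul] at h2

/-- Existence of well-separated partitions: for every `ε ∈ (0,1)` with `1/ε` an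
integer, every instance admits an ordered partition `(S_1, …, S_M, S_∞)` of its item
set satisfying the width property (within each `S_m`, intervals differ by a factor of
at most `(1/ε)^{1/ε}`), the separation property (`T_{i1} ≤ ε·T_{i2}` across blocks
`m1 < m2`), and negligibility of `S_∞` (`H(S_∞) ≤ ε·H_Σ`). -/
theorem stmt18 {n : ℕ} (T H : Fin n → ℕ) (hT : ∀ i, 0 < T i) (hH : ∀ i, 0 < H i)
    (ε : ℝ) (hε : ε ∈ Set.Ioo (0 : ℝ) 1) (hεint : ∃ k : ℕ, (k : ℝ) * ε = 1) :
    ∃ (M : ℕ) (S : Fin M → Finset (Fin n)) (Sinf : Finset (Fin n)),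
      (∀ m1 m2, m1 ≠ m2 → Disjoint (S m1) (S m2)) ∧
      (∀ m, Disjoint (S m) Sinf) ∧
      (Finset.univ.biUnion S ∪ Sinf = Finset.univ) ∧
      (∀ m, ∀ i1 ∈ S m, ∀ i2 ∈ S m,
        (T i1 : ℝ) ≤ (1 / ε) ^ ((1 : ℝ) / ε) * (T i2 : ℝ)) ∧
      (∀ m1 m2 : Fin M, m1 < m2 →
        ∀ i1 ∈ S m1, ∀ i2 ∈ S m2, (T i1 : ℝ) ≤ ε * (T i2 : ℝ)) ∧
      (∑ i ∈ Sinf, (H i : ℝ)) ≤ ε * ∑ i, (H i : ℝ) := by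
  obtain ⟨hε0, hε1⟩ := hε
  obtain ⟨k, hk⟩ := hεint
  -- basic facts about k
  have hk1 : 1 < k := by
    by_contra hcon
    interval_cases k
    · simp at hk
    · simp at hk; linarith
  have hk0 : 0 < k := by omega
  have hkR : (0:ℝ) < k := by exact_mod_cast hk0
  have hεk : ε = 1 / (k : ℝ) := by field_simp; linarith [hk]
  -- levels
  set L : Fin n → ℕ := fun i => Nat.log k (T i) with hL
  -- choose the residue r minimizing the H-mass of its level class
  obtain ⟨r, hrmem, hrmin⟩ := Finset.exists_min_image (Finset.range k)
    (fun r => ∑ i ∈ Finset.univ.filter (fun i => L i % k = r), H i)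
    ⟨0, Finset.mem_range.mpr hk0⟩
  have hrk : r < k := Finset.mem_range.mp hrmem
  set c : ℕ := k - 1 - r with hc
  set b : Fin n → ℕ := fun i => (L i + c) / k with hb
  set M : ℕ := (Finset.univ.sup b) + 1 with hM
  set S : Fin M → Finset (Fin n) :=
    fun m => Finset.univ.filter (fun i => L i % k ≠ r ∧ b i = (m : ℕ)) with hS
  set Sinf : Finset (Fin n) := Finset.univ.filter (fun i => L i % k = r) with hSinf
  refine ⟨M, S, Sinf, ?_, ?_, ?_, ?_, ?_, ?_⟩
  · -- pairwise disjoint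
    intro m1 m2 hne
    rw [Finset.disjoint_left]
    intro i h1 h2
    simp only [hS, Finset.mem_filter] at h1 h2
    exact hne (Fin.ext (h1.2.2 ▸ h2.2.2))
  · -- disjoint from Sinf
    intro m
    rw [Finset.disjoint_left]
    intro i h1 h2
    simp only [hS, hSinf, Finset.mem_filter] at h1 h2
    exact h1.2.1 h2.2
  · -- cover
    ext i
    simp only [Finset.mem_union, Finset.mem_biUnion, Finset.mem_univ, iff_true,
      hS, hSinf, Finset.mem_filter, true_and]
    by_cases hi : L i % k = r
    · exact Or.inr hi
    · exact Or.inl ⟨⟨b i, Nat.lt_succ_of_le (Finset.le_sup (Finset.mem_univ i))⟩,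
        hi, rfl⟩
  · -- width
    intro m i1 h1 i2 h2
    simp only [hS, Finset.mem_filter] at h1 h2
    -- L i1 ≤ L i2 + (k - 1)
    have hd1 := div_eq_bounds hk0 h1.2.2
    have hd2 := div_eq_bounds hk0 h2.2.2
    have hLle : L i1 + 1 ≤ L i2 + k := by omega
    -- natural-number inequality
    have hnat : T i1 ≤ k ^ k * T i2 := by
      calc T i1 ≤ k ^ (L i1 + 1) := le_of_lt (Nat.lt_pow_succ_log_self hk1 _)
        _ ≤ k ^ (L i2 + k) := Nat.pow_le_pow_right hk0 hLle
        _ = k ^ k * k ^ (L i2) := by rw [← pow_add]; ring_nf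
        _ ≤ k ^ k * T i2 := Nat.mul_le_mul_left _ (Nat.pow_log_le_self k (hT i2).ne')
    have hcast : (T i1 : ℝ) ≤ (k : ℝ) ^ k * (T i2 : ℝ) := by exact_mod_cast hnat
    have hinv : (1 / ε : ℝ) = (k : ℝ) := by rw [hεk]; field_simp
    rw [hinv, Real.rpow_natCast]
    exact hcast
  · -- separation
    intro m1 m2 hm i1 h1 i2 h2
    simp only [hS, Finset.mem_filter] at h1 h2
    have hd1 := div_eq_bounds hk0 h1.2.2
    have hd2 := div_eq_bounds hk0 h2.2.2
    have hmm : (m1 : ℕ) + 1 ≤ (m2 : ℕ) := hm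
    have hb12 : ((m1:ℕ) + 1) * k ≤ (m2:ℕ) * k := Nat.mul_le_mul_right k hmm
    rw [add_mul, one_mul] at hb12
    -- L i1 + c cannot be at the top of its window, since L i1 % k ≠ r
    have htop : L i1 + c ≠ (m1:ℕ) * k + (k - 1) := by
      intro hcontra
      have hLi1 : L i1 = r + (m1:ℕ) * k := by omega
      have : L i1 % k = r := by
        rw [hLi1, Nat.add_mul_mod_self_right, Nat.mod_eq_of_lt hrk]
      exact h1.2.1 this
    have hL2 : L i1 + 2 ≤ L i2 := by omega
    -- natural-number inequality : k * T i1 ≤ T i2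
    have hnat : k * T i1 ≤ T i2 := by
      calc k * T i1 ≤ k * k ^ (L i1 + 1) :=
            Nat.mul_le_mul_left _ (le_of_lt (Nat.lt_pow_succ_log_self hk1 _))
        _ = k ^ (L i1 + 2) := by ring
        _ ≤ k ^ (L i2) := Nat.pow_le_pow_right hk0 hL2
        _ ≤ T i2 := Nat.pow_log_le_self k (hT i2).ne'
    have hcast : (k : ℝ) * (T i1 : ℝ) ≤ (T i2 : ℝ) := by exact_mod_cast hnat
    calc (T i1 : ℝ) = ε * ((k:ℝ) * T i1) := by
          rw [← mul_assoc, mul_comm ε, hk, one_mul]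
      _ ≤ ε * T i2 := by nlinarith
  · -- negligibility
    have hsum : ∑ r' ∈ Finset.range k,
        ∑ i ∈ Finset.univ.filter (fun i => L i % k = r'), H i = ∑ i, H i := by
      exact Finset.sum_fiberwise_of_maps_to
        (fun i _ => Finset.mem_range.mpr (Nat.mod_lt _ hk0)) H
    have hmin : k * ∑ i ∈ Finset.univ.filter (fun i => L i % k = r), H i
        ≤ ∑ i, H i := by
      calc k * ∑ i ∈ Finset.univ.filter (fun i => L i % k = r), H i
          = (Finset.range k).card • ∑ i ∈ Finset.univ.filter (fun i => L i % k = r), H i := by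
            rw [Finset.card_range]; simp [smul_eq_mul]
        _ ≤ ∑ r' ∈ Finset.range k,
              ∑ i ∈ Finset.univ.filter (fun i => L i % k = r'), H i :=
            Finset.card_nsmul_le_sum _ _ _ (fun r' hr' => hrmin r' hr')
        _ = ∑ i, H i := hsum
    have hcast : (k : ℝ) * ∑ i ∈ Sinf, (H i : ℝ) ≤ ∑ i, (H i : ℝ) := by
      rw [hSinf]
      exact_mod_cast hmin
    rw [hεk, div_mul_eq_mul_div, one_mul, le_div_iff₀ hkR, mul_comm]
    exact hcast
end

section
/- Let T_1, …, T_n be pairwise coprime positive integers defining a continuous inventory staggering instance, and let T_min = min_{i∈[n]} T_i. Then every real shift vector τ ∈ ℝ^n satisfies I_max(τ) ≥ (1 − 1/T_min)·H_Σ; in particular, OPT^cont ≥ (1 − 1/T_min)·H_Σ. -/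
noncomputable def cInvLevel (T H : ℕ) (τ t : ℝ) : ℝ :=
  (H : ℝ) * (1 - Int.fract ((t - τ) / (T : ℝ)))

noncomputable def cImax {ι : Type*} [Fintype ι] (T H : ι → ℕ) (τ : ι → ℝ) : ℝ :=
  ⨆ t : ℝ, ∑ i, cInvLevel (T i) (H i) (τ i) t

noncomputable def OPTcont {ι : Type*} [Fintype ι] (T H : ι → ℕ) : ℝ :=
  ⨅ τ : ι → ℝ, cImax T H τ

/-- For a continuous instance with pairwise coprime time intervals, every real shift
vector has peak inventory level at least `(1 − 1/T_min)·H_Σ`; in particular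
`OPT^cont ≥ (1 − 1/T_min)·H_Σ`. -/
theorem stmt19 {n : ℕ} (hn : 0 < n) (T H : Fin n → ℕ) (hT : ∀ i, 0 < T i)
    (hH : ∀ i, 0 < H i)
    (hcop : ∀ i j, i ≠ j → Nat.Coprime (T i) (T j)) :
    (∀ τ : Fin n → ℝ,
      (1 - 1 / ((Finset.univ.inf'
          (Finset.univ_nonempty_iff.mpr (Fin.pos_iff_nonempty.mp hn)) T : ℕ) : ℝ))
        * ∑ i, (H i : ℝ) ≤ cImax T H τ) ∧
    (1 - 1 / ((Finset.univ.inf'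
        (Finset.univ_nonempty_iff.mpr (Fin.pos_iff_nonempty.mp hn)) T : ℕ) : ℝ))
      * ∑ i, (H i : ℝ) ≤ OPTcont T H := by
  set Tm := Finset.univ.inf' (Finset.univ_nonempty_iff.mpr (Fin.pos_iff_nonempty.mp hn)) T with hTmdef
  have hTm_le : ∀ i, Tm ≤ T i := fun i => Finset.inf'_le T (Finset.mem_univ i)
  have hTm_pos : 0 < Tm := by
    obtain ⟨i, _, hi⟩ := Finset.exists_mem_eq_inf' (Finset.univ_nonempty_iff.mpr (Fin.pos_iff_nonempty.mp hn)) T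
    rw [hTmdef, hi]; exact hT i
  have hTmR : (0:ℝ) < (Tm:ℝ) := by exact_mod_cast hTm_pos
  have hc_nonneg : (0:ℝ) ≤ 1 - 1/(Tm:ℝ) := by
    have : 1/(Tm:ℝ) ≤ 1 := by
      rw [div_le_one hTmR]; exact_mod_cast hTm_pos
    linarith
  have main : ∀ τ : Fin n → ℝ, (1 - 1/(Tm:ℝ)) * ∑ i, (H i : ℝ) ≤ cImax T H τ := by
    intro τ
    set a : Fin n → ℕ := fun i => (⌈τ i⌉ % (T i : ℤ)).toNat with ha
    obtain ⟨k, hk⟩ := Nat.chineseRemainderOfFinset a T Finset.univ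
      (fun i _ => (hT i).ne') (fun i _ j _ hij => hcop i j hij)
    have hdvd : ∀ i, ((T i : ℤ)) ∣ (k : ℤ) - ⌈τ i⌉ := by
      intro i
      have h1 : ((T i : ℕ):ℤ) ∣ (a i : ℤ) - (k:ℤ) := (hk i (Finset.mem_univ i)).dvd
      have hai : (a i : ℤ) = ⌈τ i⌉ % (T i : ℤ) := by
        rw [ha]; exact Int.toNat_of_nonneg (Int.emod_nonneg _ (by exact_mod_cast (hT i).ne'))
      have h2 : ((T i):ℤ) ∣ ⌈τ i⌉ - ⌈τ i⌉ % (T i : ℤ) := Int.dvd_self_sub_of_emod_eq rfl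
      have := dvd_add h2 (hai ▸ h1)
      rw [dvd_sub_comm]
      simpa using this
    have hfract : ∀ i, Int.fract (((k:ℝ) - τ i)/((T i : ℕ):ℝ)) ≤ 1/(Tm:ℝ) := by
      intro i
      obtain ⟨m, hm⟩ := hdvd i
      have hTi : (0:ℝ) < ((T i:ℕ):ℝ) := by exact_mod_cast hT i
      have hceil1 : τ i ≤ (⌈τ i⌉:ℝ) := Int.le_ceil _
      have hceil2 : (⌈τ i⌉:ℝ) < τ i + 1 := Int.ceil_lt_add_one _
      have hmR : (k:ℝ) - (⌈τ i⌉:ℝ) = (T i:ℝ) * (m:ℝ) := by exact_mod_cast hm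
      have heq : ((k:ℝ) - τ i)/((T i:ℕ):ℝ) = (m:ℝ) + ((⌈τ i⌉:ℝ) - τ i)/((T i:ℕ):ℝ) := by
        field_simp
        linarith [hmR]
      rw [heq, Int.fract_intCast_add]
      have hx0 : 0 ≤ ((⌈τ i⌉:ℝ) - τ i)/((T i:ℕ):ℝ) := div_nonneg (by linarith) hTi.le
      have hx1 : ((⌈τ i⌉:ℝ) - τ i)/((T i:ℕ):ℝ) ≤ 1/(Tm:ℝ) := by
        apply div_le_div₀ (by norm_num) (by linarith) hTmR
        exact_mod_cast hTm_le i
      have hx1' : ((⌈τ i⌉:ℝ) - τ i)/((T i:ℕ):ℝ) < 1 := by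
        rw [div_lt_one hTi]
        have : (1:ℝ) ≤ ((T i:ℕ):ℝ) := by exact_mod_cast hT i
        linarith
      rw [Int.fract_eq_self.mpr ⟨hx0, hx1'⟩]
      exact hx1
    have hsum : (1 - 1/(Tm:ℝ)) * ∑ i, (H i : ℝ) ≤ ∑ i, cInvLevel (T i) (H i) (τ i) (k:ℝ) := by
      rw [Finset.mul_sum]
      apply Finset.sum_le_sum
      intro i _
      unfold cInvLevel
      rw [mul_comm ((1:ℝ) - 1/(Tm:ℝ))]
      apply mul_le_mul_of_nonneg_left _ (by positivity)
      linarith [hfract i]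
    have hbdd : BddAbove (Set.range fun t => ∑ i, cInvLevel (T i) (H i) (τ i) t) := by
      refine ⟨∑ i, (H i : ℝ), ?_⟩
      rintro _ ⟨t, rfl⟩
      apply Finset.sum_le_sum
      intro i _
      unfold cInvLevel
      have := Int.fract_nonneg ((t - τ i)/((T i:ℕ):ℝ))
      nlinarith [Nat.cast_nonneg (H i) (α := ℝ)]
    exact hsum.trans (le_ciSup hbdd (k:ℝ))
  exact ⟨main, le_ciInf main⟩
end
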